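/- arXiv:2308.10017 — 2 statements merged into one kernel-verified Lean document; each statement's English description precedes it below -/
import Mathlib

section
/- Let 𝒢 := ((ℌ_n, ω_n))_{n∈ℕ*} be a *-fusion frame of a Hilbert 𝔄-module ℌ. Then the synthesis operator 𝒯_𝒢 : ℌ → l₂(ℌ), x ↦ (ω_n P_{ℌ_n}(x))_{n∈ℕ*}, is a well-defined bounded 𝔄-linear adjointable operator, and its adjoint is the well-defined bounded operator 𝒯_𝒢* : l₂(ℌ) → ℌ given by 𝒯_𝒢*((y_n)_{n∈ℕ*}) = ∑_{n=1}^∞ ω_n P_{ℌ_n}(y_n), the series converging in ℌ for every (y_n) ∈ l₂(ℌ). -/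
open scoped InnerProductSpace RightActions

/-- The December 2024 Mathlib `CStarModule` (right Hilbert module, inner product
`𝔄`-linear on the right: `⟪x, y <• a⟫ = ⟪x, y⟫ * a`), reproduced verbatim since Mathlib's
`CStarModule` is now a left module with another convention. -/
class RightCStarModule (A : outParam <| Type*) (E : Type*) [NonUnitalSemiring A] [StarRing A]
    [Module ℂ A] [AddCommGroup E] [Module ℂ E] [PartialOrder A] [SMul Aᵐᵒᵖ E] [Norm A] [Norm E]
    extends Inner A E where
  inner_add_right {x} {y} {z} : inner x (y + z) = inner x y + inner x z
  inner_self_nonneg {x} : 0 ≤ inner x x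
  inner_self {x} : inner x x = 0 ↔ x = 0
  inner_op_smul_right {a : A} {x y : E} : inner x (y <• a) = inner x y * a
  inner_smul_right_complex {z : ℂ} {x} {y} : inner x (z • y) = z • inner x y
  star_inner x y : star (inner x y) = inner y x
  norm_eq_sqrt_norm_inner_self x : ‖x‖ = √‖inner x x‖

variable {𝔄 : Type*} [CStarAlgebra 𝔄] [PartialOrder 𝔄] [StarOrderedRing 𝔄]
variable {H : Type*} [NormedAddCommGroup H] [NormedSpace ℂ H] [Module 𝔄ᵐᵒᵖ H]
  [RightCStarModule 𝔄 H] [CompleteSpace H]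

/-- An element of a C*-algebra is *strictly positive* if it is positive and invertible. -/
def IsStrictlyPositive' (a : 𝔄) : Prop := 0 ≤ a ∧ IsUnit a

/-- A *weight* of the C*-algebra `𝔄` is a sequence of central strictly positive elements. -/
def IsWeight (ω : ℕ → 𝔄) : Prop :=
  ∀ n, ω n ∈ Set.center 𝔄 ∧ IsStrictlyPositive' (ω n)

/-- `P` is the orthogonal projection of the Hilbert `𝔄`-module `H` onto the orthogonally
complemented submodule `K`: a bounded `𝔄`-linear idempotent which is self-adjoint with
respect to the `𝔄`-valued inner product and has range `K`. -/
def IsOrthoProjectionOnto (P : H →L[ℂ] H) (K : Submodule 𝔄ᵐᵒᵖ H) : Prop :=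
  (∀ (a : 𝔄) (x : H), P (x <• a) = (P x) <• a) ∧
  (∀ x, P (P x) = P x) ∧
  (∀ x y : H, ⟪P x, y⟫_𝔄 = ⟪x, P y⟫_𝔄) ∧
  (∀ x, P x ∈ K) ∧ (∀ x ∈ K, P x = x)

/-- The weighted sequence of orthogonally complemented submodules whose orthogonal
projections are `P n` is a *-fusion frame of `H` with lower bound `A` and upper bound `B`. -/
def IsFusionFrameWith (P : ℕ → H →L[ℂ] H) (ω : ℕ → 𝔄) (A B : 𝔄) : Prop :=
  IsStrictlyPositive' A ∧ IsStrictlyPositive' B ∧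
  ∀ x : H, Summable (fun n => ω n ^ 2 * ⟪P n x, P n x⟫_𝔄) ∧
    ⟪x <• A, x <• A⟫_𝔄 ≤ ∑' n, ω n ^ 2 * ⟪P n x, P n x⟫_𝔄 ∧
    (∑' n, ω n ^ 2 * ⟪P n x, P n x⟫_𝔄) ≤ ⟪x <• B, x <• B⟫_𝔄

/-- A *-fusion frame (with some pair of strictly positive bounds). -/
def IsFusionFrame (P : ℕ → H →L[ℂ] H) (ω : ℕ → 𝔄) : Prop :=
  ∃ A B : 𝔄, IsFusionFrameWith P ω A B

set_option linter.unusedSectionVars false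

lemma rcs_star_inner (x y : H) : star ⟪x, y⟫_𝔄 = ⟪y, x⟫_𝔄 := RightCStarModule.star_inner x y

lemma rcs_norm_sq_eq (x : H) : ‖x‖ ^ 2 = ‖⟪x, x⟫_𝔄‖ := by
  rw [RightCStarModule.norm_eq_sqrt_norm_inner_self (A := 𝔄) x, Real.sq_sqrt (norm_nonneg _)]

lemma rcs_inner_op_smul_left (a : 𝔄) (x y : H) : ⟪x <• a, y⟫_𝔄 = star a * ⟪x, y⟫_𝔄 := by
  rw [← rcs_star_inner, RightCStarModule.inner_op_smul_right, star_mul, rcs_star_inner]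

def rcsLin (x : H) : H →ₗ[ℂ] 𝔄 where
  toFun y := ⟪x, y⟫_𝔄
  map_add' _ _ := RightCStarModule.inner_add_right
  map_smul' c y := by
    simp only [RingHom.id_apply]
    exact RightCStarModule.inner_smul_right_complex

lemma rcs_inner_sum_right {ι : Type*} (s : Finset ι) (x : H) (y : ι → H) :
    ⟪x, ∑ i ∈ s, y i⟫_𝔄 = ∑ i ∈ s, ⟪x, y i⟫_𝔄 :=
  map_sum (rcsLin x) y s

lemma rcs_inner_sub_right (x y z : H) : ⟪x, y - z⟫_𝔄 = ⟪x, y⟫_𝔄 - ⟪x, z⟫_𝔄 :=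
  map_sub (rcsLin x) y z

lemma rcs_inner_sub_left (x y z : H) : ⟪x - y, z⟫_𝔄 = ⟪x, z⟫_𝔄 - ⟪y, z⟫_𝔄 := by
  rw [← rcs_star_inner, rcs_inner_sub_right, star_sub, rcs_star_inner, rcs_star_inner]

lemma rcs_inner_smul_real_right (t : ℝ) (x y : H) : ⟪x, t • y⟫_𝔄 = t • ⟪x, y⟫_𝔄 := by
  rw [RCLike.real_smul_eq_coe_smul (K := ℂ) t y, RightCStarModule.inner_smul_right_complex,
    ← RCLike.real_smul_eq_coe_smul (K := ℂ)]

lemma rcs_inner_smul_real_left (t : ℝ) (x y : H) : ⟪t • x, y⟫_𝔄 = t • ⟪x, y⟫_𝔄 := by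
  rw [← rcs_star_inner, rcs_inner_smul_real_right, RCLike.real_smul_eq_coe_smul (K := ℂ),
    star_smul, rcs_star_inner, Complex.star_def, RCLike.conj_ofReal,
    ← RCLike.real_smul_eq_coe_smul (K := ℂ)]

lemma cs_finset {ι : Type*} (s : Finset ι) (x y : ι → H) :
    ‖∑ i ∈ s, ⟪x i, y i⟫_𝔄‖ ≤ √‖∑ i ∈ s, ⟪x i, x i⟫_𝔄‖ * √‖∑ i ∈ s, ⟪y i, y i⟫_𝔄‖ := by
  set G := ∑ i ∈ s, ⟪x i, x i⟫_𝔄 with hG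
  set K := ∑ i ∈ s, ⟪y i, y i⟫_𝔄 with hK
  set a := ∑ i ∈ s, ⟪x i, y i⟫_𝔄 with ha
  have hstar : star a = ∑ i ∈ s, ⟪y i, x i⟫_𝔄 := by
    rw [ha, star_sum]
    exact Finset.sum_congr rfl fun i _ => rcs_star_inner _ _
  have hs0 : (0 : 𝔄) ≤ star a * a := star_mul_self_nonneg a
  have hGsa : IsSelfAdjoint G := by
    rw [hG, IsSelfAdjoint, star_sum]
    exact Finset.sum_congr rfl fun i _ => rcs_star_inner _ _
  have hforall : ∀ t : ℝ, ‖G‖ < t → ‖a‖ * ‖a‖ ≤ t * ‖K‖ := by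
    intro t ht
    have tpos : 0 < t := lt_of_le_of_lt (norm_nonneg _) ht
    have term : ∀ i, ⟪x i <• a - t • y i, x i <• a - t • y i⟫_𝔄 =
        star a * ⟪x i, x i⟫_𝔄 * a - t • (star a * ⟪x i, y i⟫_𝔄)
          - t • (⟪y i, x i⟫_𝔄 * a) + (t * t) • ⟪y i, y i⟫_𝔄 := by
      intro i
      simp only [rcs_inner_sub_left, rcs_inner_sub_right, rcs_inner_op_smul_left, sub_mul, mul_sub,
        smul_sub,
        RightCStarModule.inner_op_smul_right, rcs_inner_smul_real_left,
        rcs_inner_smul_real_right, smul_mul_assoc, smul_smul]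
      abel
    have hQ : ∑ i ∈ s, ⟪x i <• a - t • y i, x i <• a - t • y i⟫_𝔄 =
        star a * G * a - t • (star a * a) - t • (star a * a) + (t * t) • K := by
      rw [Finset.sum_congr rfl fun i _ => term i]
      simp only [Finset.sum_add_distrib, Finset.sum_sub_distrib, ← Finset.smul_sum,
        ← Finset.mul_sum, ← Finset.sum_mul]
      rw [← hG, ← hK, ← ha, ← hstar]
    have hQ0 : (0 : 𝔄) ≤ star a * G * a - t • (star a * a) - t • (star a * a) + (t * t) • K := by
      rw [← hQ]
      exact Finset.sum_nonneg fun i _ => RightCStarModule.inner_self_nonneg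
    have hconj : star a * G * a ≤ ‖G‖ • (star a * a) :=
      CStarAlgebra.star_left_conjugate_le_norm_smul hGsa
    have key : t • (star a * a) ≤ (t * t) • K := by
      have hnn : (0 : 𝔄) ≤ (star a * G * a - t • (star a * a) - t • (star a * a) + (t * t) • K)
          + (‖G‖ • (star a * a) - star a * G * a) + (t - ‖G‖) • (star a * a) :=
        add_nonneg (add_nonneg hQ0 (sub_nonneg.mpr hconj))
          (smul_nonneg (sub_nonneg.mpr ht.le) hs0)
      have heq : (star a * G * a - t • (star a * a) - t • (star a * a) + (t * t) • K)
          + (‖G‖ • (star a * a) - star a * G * a) + (t - ‖G‖) • (star a * a)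
          = (t * t) • K - t • (star a * a) := by
        rw [sub_smul]; abel
      rw [heq] at hnn
      exact sub_nonneg.mp hnn
    have hn := CStarAlgebra.norm_le_norm_of_nonneg_of_le (smul_nonneg tpos.le hs0) key
    rw [norm_smul, norm_smul, CStarRing.norm_star_mul_self, Real.norm_eq_abs, Real.norm_eq_abs,
      abs_of_pos tpos, abs_of_pos (mul_pos tpos tpos), mul_assoc] at hn
    exact le_of_mul_le_mul_left hn tpos
  have hmain : ‖a‖ * ‖a‖ ≤ ‖G‖ * ‖K‖ := by
    apply le_of_forall_pos_le_add
    intro ε hε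
    have hK1 : (0 : ℝ) < ‖K‖ + 1 := by positivity
    have := hforall (‖G‖ + ε / (‖K‖ + 1)) (by linarith [show (0 : ℝ) < ε / (‖K‖ + 1) by positivity])
    have h2 : ε / (‖K‖ + 1) * ‖K‖ ≤ ε := by
      rw [div_mul_eq_mul_div, div_le_iff₀ hK1]; nlinarith [norm_nonneg K]
    nlinarith
  rw [← Real.sqrt_mul (norm_nonneg _)]
  refine le_trans (le_abs_self _) (Real.abs_le_sqrt ?_)
  rw [sq]; exact hmain

noncomputable def innerCL (x : H) : H →L[ℂ] 𝔄 :=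
  (rcsLin x).mkContinuous ‖x‖ fun y => by
    have h := cs_finset (Finset.univ : Finset Unit) (fun _ => x) (fun _ => y)
    simp only [Finset.univ_unique, Finset.sum_singleton] at h
    rw [RightCStarModule.norm_eq_sqrt_norm_inner_self (A := 𝔄) x,
      RightCStarModule.norm_eq_sqrt_norm_inner_self (A := 𝔄) y]
    exact h

lemma innerCL_apply (x y : H) : innerCL (𝔄 := 𝔄) x y = ⟪x, y⟫_𝔄 := rfl

/-- Theorem 3.3: if `((ℌ_n, ω_n))_n` is a *-fusion frame of `H`, then the synthesis operator
`𝒯 : H → l₂(H)`, `x ↦ (ω_n • P_{ℌ_n} x)_n`, is a well-defined bounded (𝔄-linear) adjointable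
operator whose adjoint is the well-defined bounded operator
`𝒯* : l₂(H) → H`, `(y_n)_n ↦ ∑_n ω_n • P_{ℌ_n} (y_n)`. -/
theorem fusionFrame_synthesis_adjointable
    (P : ℕ → H →L[ℂ] H) (ℌ : ℕ → Submodule 𝔄ᵐᵒᵖ H) (ω : ℕ → 𝔄)
    (hproj : ∀ n, IsOrthoProjectionOnto (P n) (ℌ n))
    (hw : IsWeight ω) (hframe : IsFusionFrame P ω) :
    -- `𝒯` is well defined: `𝒯 x` lies in `l₂(H)` for every `x`
    (∀ x : H, Summable (fun n => ⟪(P n x) <• ω n, (P n x) <• ω n⟫_𝔄)) ∧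
    -- `𝒯` is bounded: `‖𝒯 x‖_{l₂(H)}² ≤ C² ‖x‖²`
    (∃ C : ℝ, 0 < C ∧ ∀ x : H,
      ‖∑' n, ⟪(P n x) <• ω n, (P n x) <• ω n⟫_𝔄‖ ≤ C ^ 2 * ‖x‖ ^ 2) ∧
    -- `𝒯*` is well defined: the series `∑_n ω_n • P_{ℌ_n}(y_n)` converges for `y ∈ l₂(H)`
    (∀ y : ℕ → H, Summable (fun n => ⟪y n, y n⟫_𝔄) →
      Summable (fun n => (P n (y n)) <• ω n)) ∧
    -- `𝒯*` is bounded
    (∃ C : ℝ, 0 < C ∧ ∀ y : ℕ → H, Summable (fun n => ⟪y n, y n⟫_𝔄) →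
      ‖∑' n, (P n (y n)) <• ω n‖ ^ 2 ≤ C ^ 2 * ‖∑' n, ⟪y n, y n⟫_𝔄‖) ∧
    -- `𝒯*` is the adjoint of `𝒯`: `⟪𝒯 x, y⟫_{l₂(H)} = ⟪x, 𝒯* y⟫`
    (∀ (x : H) (y : ℕ → H), Summable (fun n => ⟪y n, y n⟫_𝔄) →
      Summable (fun n => ⟪(P n x) <• ω n, y n⟫_𝔄) ∧
      (∑' n, ⟪(P n x) <• ω n, y n⟫_𝔄) = ⟪x, ∑' n, (P n (y n)) <• ω n⟫_𝔄) := by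
  classical
  obtain ⟨A, B, hA, hB, hfr⟩ := hframe
  have hωsa : ∀ n, star (ω n) = ω n := fun n =>
    (IsSelfAdjoint.of_nonneg (hw n).2.1).star_eq
  have hωc : ∀ n (a : 𝔄), ω n * a = a * ω n := fun n a =>
    (Set.mem_center_iff.mp (hw n).1).comm a
  have k1 : ∀ n (x : H),
      ⟪(P n x) <• ω n, (P n x) <• ω n⟫_𝔄 = ω n ^ 2 * ⟪P n x, P n x⟫_𝔄 := by
    intro n x
    rw [RightCStarModule.inner_op_smul_right, rcs_inner_op_smul_left, hωsa n,
      ← hωc n, ← mul_assoc, ← sq]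
  have k2 : ∀ n (x y : H), ⟪(P n x) <• ω n, y⟫_𝔄 = ⟪x, (P n y) <• ω n⟫_𝔄 := by
    intro n x y
    rw [rcs_inner_op_smul_left, RightCStarModule.inner_op_smul_right, hωsa n,
      (hproj n).2.2.1, hωc n]
  have hpos : ∀ n (x : H), 0 ≤ ω n ^ 2 * ⟪P n x, P n x⟫_𝔄 := by
    intro n x
    rw [← k1 n x]
    exact RightCStarModule.inner_self_nonneg
  have hBnorm : ∀ x : H, ‖⟪x <• B, x <• B⟫_𝔄‖ ≤ ((‖B‖ + 1) * ‖x‖) ^ 2 := by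
    intro x
    rw [RightCStarModule.inner_op_smul_right, rcs_inner_op_smul_left]
    calc ‖star B * ⟪x, x⟫_𝔄 * B‖ ≤ ‖star B * ⟪x, x⟫_𝔄‖ * ‖B‖ := norm_mul_le _ _
      _ ≤ ‖star B‖ * ‖⟪x, x⟫_𝔄‖ * ‖B‖ := by gcongr; exact norm_mul_le _ _
      _ = ‖B‖ * ‖x‖ ^ 2 * ‖B‖ := by rw [norm_star, rcs_norm_sq_eq]
      _ ≤ ((‖B‖ + 1) * ‖x‖) ^ 2 := by nlinarith [norm_nonneg B, norm_nonneg x, sq_nonneg ‖x‖]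
  have hsum1 : ∀ x : H, Summable (fun n => ⟪(P n x) <• ω n, (P n x) <• ω n⟫_𝔄) :=
    fun x => ((hfr x).1).congr fun n => (k1 n x).symm
  -- norm bound on finite pieces of the frame sums
  have hfin : ∀ (F : Finset ℕ) (z : H),
      ‖∑ n ∈ F, ⟪(P n z) <• ω n, (P n z) <• ω n⟫_𝔄‖ ≤ ((‖B‖ + 1) * ‖z‖) ^ 2 := by
    intro F z
    have h1 : ∑ n ∈ F, ⟪(P n z) <• ω n, (P n z) <• ω n⟫_𝔄 ≤ ⟪z <• B, z <• B⟫_𝔄 := by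
      calc ∑ n ∈ F, ⟪(P n z) <• ω n, (P n z) <• ω n⟫_𝔄
          = ∑ n ∈ F, ω n ^ 2 * ⟪P n z, P n z⟫_𝔄 := Finset.sum_congr rfl fun n _ => k1 n z
        _ ≤ ∑' n, ω n ^ 2 * ⟪P n z, P n z⟫_𝔄 :=
            Summable.sum_le_tsum F (fun n _ => hpos n z) (hfr z).1
        _ ≤ ⟪z <• B, z <• B⟫_𝔄 := (hfr z).2.2
    have h0 : 0 ≤ ∑ n ∈ F, ⟪(P n z) <• ω n, (P n z) <• ω n⟫_𝔄 :=
      Finset.sum_nonneg fun n _ => RightCStarModule.inner_self_nonneg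
    exact (CStarAlgebra.norm_le_norm_of_nonneg_of_le h0 h1).trans (hBnorm z)
  have keybound : ∀ (F : Finset ℕ) (y : ℕ → H),
      ‖∑ n ∈ F, (P n (y n)) <• ω n‖ ≤ (‖B‖ + 1) * √‖∑ n ∈ F, ⟪y n, y n⟫_𝔄‖ := by
    intro F y
    set z := ∑ n ∈ F, (P n (y n)) <• ω n with hz
    have h1 : ⟪z, z⟫_𝔄 = ∑ n ∈ F, ⟪(P n z) <• ω n, y n⟫_𝔄 := by
      calc ⟪z, z⟫_𝔄 = ∑ n ∈ F, ⟪z, (P n (y n)) <• ω n⟫_𝔄 := by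
            rw [hz]; exact rcs_inner_sum_right _ _ _
        _ = ∑ n ∈ F, ⟪(P n z) <• ω n, y n⟫_𝔄 :=
            Finset.sum_congr rfl fun n _ => (k2 n z (y n)).symm
    have h3 : ‖⟪z, z⟫_𝔄‖ ≤ ((‖B‖ + 1) * ‖z‖) * √‖∑ n ∈ F, ⟪y n, y n⟫_𝔄‖ := by
      rw [h1]
      refine (cs_finset F _ _).trans ?_
      have hs : √‖∑ n ∈ F, ⟪(P n z) <• ω n, (P n z) <• ω n⟫_𝔄‖ ≤ (‖B‖ + 1) * ‖z‖ := by
        have := Real.sqrt_le_sqrt (hfin F z)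
        rwa [Real.sqrt_sq (by positivity)] at this
      exact mul_le_mul_of_nonneg_right hs (Real.sqrt_nonneg _)
    have h4 : ‖z‖ ^ 2 ≤ ((‖B‖ + 1) * √‖∑ n ∈ F, ⟪y n, y n⟫_𝔄‖) * ‖z‖ := by
      rw [rcs_norm_sq_eq]
      calc ‖⟪z, z⟫_𝔄‖ ≤ ((‖B‖ + 1) * ‖z‖) * √‖∑ n ∈ F, ⟪y n, y n⟫_𝔄‖ := h3
        _ = ((‖B‖ + 1) * √‖∑ n ∈ F, ⟪y n, y n⟫_𝔄‖) * ‖z‖ := by ring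
    rcases (norm_nonneg z).eq_or_lt' with h0 | h0
    · rw [h0]; positivity
    · have : ‖z‖ * ‖z‖ ≤ ((‖B‖ + 1) * √‖∑ n ∈ F, ⟪y n, y n⟫_𝔄‖) * ‖z‖ := by
        rw [← sq]; exact h4
      exact le_of_mul_le_mul_right this h0
  have gnonneg : ∀ y : ℕ → H, ∀ n, (0 : 𝔄) ≤ ⟪y n, y n⟫_𝔄 :=
    fun y n => RightCStarModule.inner_self_nonneg
  have h𝒯star : ∀ y : ℕ → H, Summable (fun n => ⟪y n, y n⟫_𝔄) →
      Summable (fun n => (P n (y n)) <• ω n) := by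
    intro y hg
    rw [summable_iff_vanishing]
    intro e he
    obtain ⟨ε, εpos, hball⟩ := Metric.mem_nhds_iff.mp he
    have hδ : (0 : ℝ) < (ε / (2 * (‖B‖ + 1))) ^ 2 := by positivity
    obtain ⟨s, hs⟩ := summable_iff_vanishing.mp hg
      (Metric.ball 0 ((ε / (2 * (‖B‖ + 1))) ^ 2)) (Metric.ball_mem_nhds 0 hδ)
    refine ⟨s, fun t ht => hball ?_⟩
    rw [Metric.mem_ball, dist_zero_right]
    have h2 : ‖∑ n ∈ t, ⟪y n, y n⟫_𝔄‖ < (ε / (2 * (‖B‖ + 1))) ^ 2 := by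
      have := hs t ht
      rwa [Metric.mem_ball, dist_zero_right] at this
    have h3 : √‖∑ n ∈ t, ⟪y n, y n⟫_𝔄‖ < ε / (2 * (‖B‖ + 1)) := by
      have := Real.sqrt_lt_sqrt (norm_nonneg _) h2
      rwa [Real.sqrt_sq (by positivity)] at this
    have hBpos : (0 : ℝ) < ‖B‖ + 1 := by positivity
    calc ‖∑ n ∈ t, (P n (y n)) <• ω n‖ ≤ (‖B‖ + 1) * √‖∑ n ∈ t, ⟪y n, y n⟫_𝔄‖ :=
          keybound t y
      _ < (‖B‖ + 1) * (ε / (2 * (‖B‖ + 1))) := by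
          exact mul_lt_mul_of_pos_left h3 hBpos
      _ ≤ ε := by
          rw [mul_div_assoc']
          rw [div_le_iff₀ (by positivity)]
          nlinarith [εpos, hBpos]
  refine ⟨hsum1, ⟨‖B‖ + 1, by positivity, ?_⟩, h𝒯star, ⟨‖B‖ + 1, by positivity, ?_⟩, ?_⟩
  · -- boundedness of 𝒯
    intro x
    have heq : ∑' n, ⟪(P n x) <• ω n, (P n x) <• ω n⟫_𝔄
        = ∑' n, ω n ^ 2 * ⟪P n x, P n x⟫_𝔄 := tsum_congr fun n => k1 n x
    rw [heq]
    have h0 : (0 : 𝔄) ≤ ∑' n, ω n ^ 2 * ⟪P n x, P n x⟫_𝔄 := tsum_nonneg fun n => hpos n x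
    calc ‖∑' n, ω n ^ 2 * ⟪P n x, P n x⟫_𝔄‖ ≤ ‖⟪x <• B, x <• B⟫_𝔄‖ :=
          CStarAlgebra.norm_le_norm_of_nonneg_of_le h0 (hfr x).2.2
      _ ≤ ((‖B‖ + 1) * ‖x‖) ^ 2 := hBnorm x
      _ = (‖B‖ + 1) ^ 2 * ‖x‖ ^ 2 := by ring
  · -- boundedness of 𝒯*
    intro y hg
    have hsum3 := h𝒯star y hg
    have hFg : ∀ F : Finset ℕ, ‖∑ n ∈ F, ⟪y n, y n⟫_𝔄‖ ≤ ‖∑' n, ⟪y n, y n⟫_𝔄‖ := by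
      intro F
      exact CStarAlgebra.norm_le_norm_of_nonneg_of_le
        (Finset.sum_nonneg fun n _ => gnonneg y n)
        (Summable.sum_le_tsum F (fun n _ => gnonneg y n) hg)
    have hbound : ∀ F : Finset ℕ,
        ‖∑ n ∈ F, (P n (y n)) <• ω n‖ ≤ (‖B‖ + 1) * √‖∑' n, ⟪y n, y n⟫_𝔄‖ := by
      intro F
      refine (keybound F y).trans ?_
      exact mul_le_mul_of_nonneg_left (Real.sqrt_le_sqrt (hFg F)) (by positivity)
    have hlim : Filter.Tendsto (fun F : Finset ℕ => ‖∑ n ∈ F, (P n (y n)) <• ω n‖)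
        Filter.atTop (nhds ‖∑' n, (P n (y n)) <• ω n‖) := hsum3.hasSum.norm
    have hle : ‖∑' n, (P n (y n)) <• ω n‖ ≤ (‖B‖ + 1) * √‖∑' n, ⟪y n, y n⟫_𝔄‖ :=
      le_of_tendsto hlim (Filter.Eventually.of_forall hbound)
    calc ‖∑' n, (P n (y n)) <• ω n‖ ^ 2
        ≤ ((‖B‖ + 1) * √‖∑' n, ⟪y n, y n⟫_𝔄‖) ^ 2 := by
          exact pow_le_pow_left₀ (norm_nonneg _) hle 2
      _ = (‖B‖ + 1) ^ 2 * ‖∑' n, ⟪y n, y n⟫_𝔄‖ := by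
          rw [mul_pow, Real.sq_sqrt (norm_nonneg _)]
  · -- adjoint identity
    intro x y hg
    have hsum3 := h𝒯star y hg
    have hmap : HasSum (fun n => ⟪x, (P n (y n)) <• ω n⟫_𝔄)
        ⟪x, ∑' n, (P n (y n)) <• ω n⟫_𝔄 := by
      simpa only [innerCL_apply] using
        hsum3.hasSum.mapL (innerCL (𝔄 := 𝔄) x)
    refine ⟨hmap.summable.congr fun n => (k2 n x (y n)).symm, ?_⟩
    rw [tsum_congr fun n => k2 n x (y n)]
    exact hmap.tsum_eq
end

section
/- In the Hilbert space l₂(ℂ) of square-summable complex sequences indexed by ℕ* (viewed as a Hilbert ℂ-module), let U₀ := {(x_n) ∈ l₂(ℂ) : x_n = 0 for all n ∉ 4ℕ} and V₀ := {(x_n) ∈ l₂(ℂ) : x_n = 0 for all n ∉ 2ℕ}. Then U₀ and V₀ are closed (orthogonally complemented) subspaces of l₂(ℂ) which are not orthogonal, yet ‖P_{U₀} − P_{V₀}‖ = 1; in particular the angle between U₀ and V₀ equals π/2 even though U₀ and V₀ are not orthogonal. -/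
open scoped InnerProductSpace

private lemma my_eval_cont (n : ℕ+) : Continuous fun x : lp (fun _ : ℕ+ => ℂ) 2 => x n := by
  refine (LipschitzWith.of_dist_le_mul (K := 1) fun x y => ?_).continuous
  rw [dist_eq_norm, dist_eq_norm, NNReal.coe_one, one_mul]
  have : x n - y n = (x - y) n := by simp
  rw [this]
  exact lp.norm_apply_le_norm two_ne_zero _ n

private lemma my_closed_set (p : ℕ+ → Prop) :
    IsClosed {x : lp (fun _ : ℕ+ => ℂ) 2 | ∀ n, p n → x n = 0} := by
  have : {x : lp (fun _ : ℕ+ => ℂ) 2 | ∀ n, p n → x n = 0} =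
      ⋂ n, ⋂ _ : p n, {x : lp (fun _ : ℕ+ => ℂ) 2 | x n = 0} := by
    ext x; simp
  rw [this]
  exact isClosed_iInter fun n => isClosed_iInter fun _ =>
    isClosed_eq (my_eval_cont n) continuous_const

private lemma my_norm_le {a b x : lp (fun _ : ℕ+ => ℂ) 2}
    (h1 : RCLike.re ⟪x, a⟫_ℂ = ‖a‖^2) (h2 : RCLike.re ⟪x, b⟫_ℂ = ‖b‖^2) :
    ‖a - b‖ ≤ ‖x‖ := by
  have e1 := @norm_sub_sq ℂ _ _ _ _ a b
  have e2 := @norm_sub_sq ℂ _ _ _ _ x (a + b)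
  have e3 := @norm_add_sq ℂ _ _ _ _ a b
  rw [inner_add_right, map_add, h1, h2] at e2
  have hn : (0:ℝ) ≤ ‖x - (a + b)‖ ^ 2 := sq_nonneg _
  nlinarith [norm_nonneg (a - b), norm_nonneg x]

/-- In the Hilbert space `l₂(ℂ)` of square-summable complex sequences indexed by `ℕ*`,
let `U₀ := {x : x_n = 0 for n ∉ 4ℕ}` and `V₀ := {x : x_n = 0 for n ∉ 2ℕ}`. Then `U₀` and
`V₀` are closed subspaces which are not orthogonal, yet `‖P_{U₀} - P_{V₀}‖ = 1`; in
particular the angle between `U₀` and `V₀` is `π/2` although they are not orthogonal. -/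
theorem not_orthogonal_but_angle_pi_div_two
    (U₀ V₀ : Set (lp (fun _ : ℕ+ => ℂ) 2))
    (hU₀ : U₀ = {x | ∀ n : ℕ+, ¬ (4 ∣ (n : ℕ)) → x n = 0})
    (hV₀ : V₀ = {x | ∀ n : ℕ+, ¬ (2 ∣ (n : ℕ)) → x n = 0}) :
    IsClosed U₀ ∧ IsClosed V₀ ∧
    -- `U₀` and `V₀` are not orthogonal
    ¬ (∀ u ∈ U₀, ∀ v ∈ V₀, ⟪u, v⟫_ℂ = 0) ∧
    -- yet the distance between the two orthogonal projections is `1`,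
    -- i.e. the angle between `U₀` and `V₀` is `π/2`
    (∀ P Q : lp (fun _ : ℕ+ => ℂ) 2 →L[ℂ] lp (fun _ : ℕ+ => ℂ) 2,
      (∀ x, P (P x) = P x) → (∀ x y, ⟪P x, y⟫_ℂ = ⟪x, P y⟫_ℂ) →
      (∀ x, P x ∈ U₀) → (∀ x ∈ U₀, P x = x) →
      (∀ x, Q (Q x) = Q x) → (∀ x y, ⟪Q x, y⟫_ℂ = ⟪x, Q y⟫_ℂ) →
      (∀ x, Q x ∈ V₀) → (∀ x ∈ V₀, Q x = x) →
      ‖P - Q‖ = 1 ∧ Real.arcsin ‖P - Q‖ = Real.pi / 2) := by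
  subst hU₀; subst hV₀
  -- the distinguished unit vectors `e₂` and `e₄`
  set e₂ : lp (fun _ : ℕ+ => ℂ) 2 := lp.single 2 (2 : ℕ+) (1 : ℂ) with he₂
  set e₄ : lp (fun _ : ℕ+ => ℂ) 2 := lp.single 2 (4 : ℕ+) (1 : ℂ) with he₄
  have he₄U : e₄ ∈ {x : lp (fun _ : ℕ+ => ℂ) 2 | ∀ n : ℕ+, ¬ (4 ∣ (n : ℕ)) → x n = 0} := by
    intro n hn
    refine lp.single_apply_ne 2 _ _ (fun h => hn ?_)
    subst h; decide
  have he₄V : e₄ ∈ {x : lp (fun _ : ℕ+ => ℂ) 2 | ∀ n : ℕ+, ¬ (2 ∣ (n : ℕ)) → x n = 0} := by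
    intro n hn
    refine lp.single_apply_ne 2 _ _ (fun h => hn ?_)
    subst h; decide
  have he₂V : e₂ ∈ {x : lp (fun _ : ℕ+ => ℂ) 2 | ∀ n : ℕ+, ¬ (2 ∣ (n : ℕ)) → x n = 0} := by
    intro n hn
    refine lp.single_apply_ne 2 _ _ (fun h => hn ?_)
    subst h; decide
  -- `e₂` is orthogonal to every element of `U₀`
  have horth : ∀ u ∈ {x : lp (fun _ : ℕ+ => ℂ) 2 | ∀ n : ℕ+, ¬ (4 ∣ (n : ℕ)) → x n = 0}, ⟪e₂, u⟫_ℂ = 0 := by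
    intro u hu
    rw [he₂, lp.inner_single_left, RCLike.inner_apply]
    have h2 : u (2 : ℕ+) = 0 := hu 2 (by decide)
    simp [h2]
  refine ⟨my_closed_set _, my_closed_set _, ?_, ?_⟩
  · -- not orthogonal
    intro h
    have h1 : ⟪e₄, e₄⟫_ℂ = 0 := h e₄ he₄U e₄ he₄V
    rw [he₄, lp.inner_single_left, RCLike.inner_apply, lp.single_apply_self] at h1
    simp at h1
  · intro P Q hPi hPa hPm hPf hQi hQa hQm hQf
    have hQe : Q e₂ = e₂ := hQf e₂ he₂V
    have hPe : P e₂ = 0 := by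
      have h1 : ⟪P e₂, P e₂⟫_ℂ = 0 := by
        rw [hPa e₂ (P e₂), hPi]
        exact horth _ (hPm e₂)
      exact inner_self_eq_zero.mp h1
    have hne : ‖e₂‖ = 1 := by
      have := lp.norm_single (p := 2) (E := fun _ : ℕ+ => ℂ) (by norm_num) (2 : ℕ+) (1 : ℂ)
      exact this.trans norm_one
    have key : ∀ x : lp (fun _ : ℕ+ => ℂ) 2, ‖(P - Q) x‖ ≤ 1 * ‖x‖ := by
      intro x
      rw [ContinuousLinearMap.sub_apply, one_mul]
      refine my_norm_le ?_ ?_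
      · have : ⟪x, P x⟫_ℂ = ⟪P x, P x⟫_ℂ := by rw [hPa x (P x), hPi]
        rw [this, @inner_self_eq_norm_sq ℂ]
      · have : ⟪x, Q x⟫_ℂ = ⟪Q x, Q x⟫_ℂ := by rw [hQa x (Q x), hQi]
        rw [this, @inner_self_eq_norm_sq ℂ]
    have hub : ‖P - Q‖ ≤ 1 := ContinuousLinearMap.opNorm_le_bound _ zero_le_one key
    have hlb : 1 ≤ ‖P - Q‖ := by
      have h1 := (P - Q).le_opNorm e₂
      rw [ContinuousLinearMap.sub_apply, hPe, hQe, zero_sub, norm_neg, hne, mul_one] at h1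
      exact h1
    have : ‖P - Q‖ = 1 := le_antisymm hub hlb
    exact ⟨this, by rw [this, Real.arcsin_one]⟩
end
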